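/- Let A be an n×n real matrix, B an n×m real matrix, G an m×m real symmetric positive definite matrix, and C a k×n real matrix with rank C = k and Moore–Penrose pseudoinverse C⁺, such that CA(I − C⁺C) = 0. Suppose there exist a k×k real symmetric positive definite matrix P and a real α > 0 such that the block matrix [[P(CAC⁺) + (CAC⁺)ᵀP + αP, P(CB)], [(CB)ᵀP, −αG]] is negative definite. Then for every differentiable x : ℝ → ℝⁿ and every f : ℝ → ℝᵐ with f(t)ᵀGf(t) ≤ 1 for all t ≥ 0 and x′(t) = Ax(t) + Bf(t) for all t ≥ 0, one has: (i) limsup_{t→∞} x(t)ᵀCᵀPCx(t) ≤ 1, and (ii) for all t₀ ≤ t with t₀ ≥ 0, if x(t₀)ᵀCᵀPCx(t₀) ≤ 1 then x(t)ᵀCᵀPCx(t) ≤ 1. -/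

import Mathlib

open Matrix Filter

/-- `Ap` is the Moore–Penrose pseudoinverse of `A`. -/
def IsMoorePenrose {m n : ℕ} (A : Matrix (Fin m) (Fin n) ℝ)
    (Ap : Matrix (Fin n) (Fin m) ℝ) : Prop :=
  A * Ap * A = A ∧ Ap * A * Ap = Ap ∧ (A * Ap)ᵀ = A * Ap ∧ (Ap * A)ᵀ = Ap * A

private lemma dot_mulVec_swap {a b : ℕ} (M : Matrix (Fin a) (Fin b) ℝ)
    (u : Fin a → ℝ) (v : Fin b → ℝ) : u ⬝ᵥ M *ᵥ v = (Mᵀ *ᵥ u) ⬝ᵥ v := by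
  rw [Matrix.dotProduct_mulVec, Matrix.mulVec_transpose]

private lemma swap2 {a b c : ℕ} (M : Matrix (Fin a) (Fin b) ℝ)
    (Pm : Matrix (Fin a) (Fin c) ℝ) (u : Fin b → ℝ) (v : Fin c → ℝ) :
    (M *ᵥ u) ⬝ᵥ Pm *ᵥ v = u ⬝ᵥ (Mᵀ * Pm) *ᵥ v := by
  rw [← Matrix.mulVec_mulVec, dot_mulVec_swap Mᵀ, Matrix.transpose_transpose]

private lemma hasDerivAt_quadratic {n : ℕ} (Q : Matrix (Fin n) (Fin n) ℝ)
    (x : ℝ → Fin n → ℝ) (v : Fin n → ℝ) (t : ℝ) (hx : HasDerivAt x v t) :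
    HasDerivAt (fun s => x s ⬝ᵥ Q *ᵥ x s) (v ⬝ᵥ Q *ᵥ x t + x t ⬝ᵥ Q *ᵥ v) t := by
  have hxi : ∀ i, HasDerivAt (fun s => x s i) (v i) t := fun i => hasDerivAt_pi.mp hx i
  have h : HasDerivAt (fun s => ∑ i, ∑ j, x s i * (Q i j * x s j))
      (∑ i, ∑ j, (v i * (Q i j * x t j) + x t i * (Q i j * v j))) t := by
    apply HasDerivAt.fun_sum; intro i _
    apply HasDerivAt.fun_sum; intro j _
    exact (hxi i).mul ((hxi j).const_mul (Q i j))
  convert h using 1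
  · funext s
    simp [dotProduct, Matrix.mulVec, Finset.mul_sum]
  · simp [dotProduct, Matrix.mulVec, Finset.mul_sum, Finset.sum_add_distrib]

theorem attracting_cylinder (n m k : ℕ)
    (A : Matrix (Fin n) (Fin n) ℝ) (B : Matrix (Fin n) (Fin m) ℝ)
    (G : Matrix (Fin m) (Fin m) ℝ) (hG : G.PosDef)
    (C : Matrix (Fin k) (Fin n) ℝ) (hrankC : C.rank = k)
    (Cp : Matrix (Fin n) (Fin k) ℝ) (hCp : IsMoorePenrose C Cp)
    (hCA : C * A * (1 - Cp * C) = 0)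
    (P : Matrix (Fin k) (Fin k) ℝ) (hP : P.PosDef)
    (α : ℝ) (hα : 0 < α)
    (hLMI : (-(Matrix.fromBlocks
        (P * (C * A * Cp) + (C * A * Cp)ᵀ * P + α • P) (P * (C * B))
        ((C * B)ᵀ * P) (-(α • G)))).PosDef) :
    ∀ (x : ℝ → Fin n → ℝ) (f : ℝ → Fin m → ℝ),
      Differentiable ℝ x →
      (∀ t : ℝ, 0 ≤ t → f t ⬝ᵥ G.mulVec (f t) ≤ 1) →
      (∀ t : ℝ, 0 ≤ t → HasDerivAt x (A.mulVec (x t) + B.mulVec (f t)) t) →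
      limsup (fun t => x t ⬝ᵥ (Cᵀ * P * C).mulVec (x t)) atTop ≤ 1 ∧
      ∀ t₀ t : ℝ, 0 ≤ t₀ → t₀ ≤ t →
        x t₀ ⬝ᵥ (Cᵀ * P * C).mulVec (x t₀) ≤ 1 →
        x t ⬝ᵥ (Cᵀ * P * C).mulVec (x t) ≤ 1 := by
  intro x f hx hfG hode
  set D := C * A * Cp with hDdef
  set Q := Cᵀ * P * C with hQdef
  -- CA = D C
  have hCAeq : C * A = D * C := by
    rw [Matrix.mul_sub, Matrix.mul_one, sub_eq_zero] at hCA
    rw [hDdef, Matrix.mul_assoc (C * A) Cp C]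
    exact hCA
  -- quadratic form identity
  have hQdot : ∀ u w : Fin n → ℝ, u ⬝ᵥ Q *ᵥ w = (C *ᵥ u) ⬝ᵥ P *ᵥ (C *ᵥ w) := by
    intro u w
    rw [hQdef, ← Matrix.mulVec_mulVec, ← Matrix.mulVec_mulVec,
      dot_mulVec_swap Cᵀ, Matrix.transpose_transpose]
  -- key LMI consequence
  have key : ∀ (y : Fin k → ℝ) (g : Fin m → ℝ),
      y ⬝ᵥ (P * D) *ᵥ y + y ⬝ᵥ (Dᵀ * P) *ᵥ y
        + (y ⬝ᵥ (P * (C * B)) *ᵥ g + g ⬝ᵥ ((C * B)ᵀ * P) *ᵥ y)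
        ≤ α * (g ⬝ᵥ G *ᵥ g) - α * (y ⬝ᵥ P *ᵥ y) := by
    intro y g
    have h0 := hLMI.posSemidef.dotProduct_mulVec_nonneg (Sum.elim y g)
    simp only [star_trivial, Matrix.neg_mulVec, Matrix.fromBlocks_mulVec,
      Sum.elim_comp_inl, Sum.elim_comp_inr, dotProduct_neg,
      sumElim_dotProduct_sumElim, dotProduct_add, Matrix.add_mulVec,
      Matrix.smul_mulVec, dotProduct_smul, smul_eq_mul] at h0
    linarith
  set V : ℝ → ℝ := fun t => x t ⬝ᵥ Q *ᵥ x t with hVdef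
  have hV : ∀ t, HasDerivAt V (deriv x t ⬝ᵥ Q *ᵥ x t + x t ⬝ᵥ Q *ᵥ deriv x t) t :=
    fun t => hasDerivAt_quadratic Q x (deriv x t) t (hx t).hasDerivAt
  have hVnn : ∀ t, 0 ≤ V t := by
    intro t
    have : V t = x t ⬝ᵥ Q *ᵥ x t := rfl
    rw [this, hQdot]
    simpa only [star_trivial] using hP.posSemidef.dotProduct_mulVec_nonneg (C *ᵥ x t)
  have hVle : ∀ t, 0 ≤ t →
      deriv x t ⬝ᵥ Q *ᵥ x t + x t ⬝ᵥ Q *ᵥ deriv x t ≤ α * (1 - V t) := by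
    intro t ht
    have hx' : deriv x t = A *ᵥ x t + B *ᵥ f t := (hode t ht).deriv
    have hT : Aᵀ * (Cᵀ * (P * C)) = Cᵀ * (Dᵀ * (P * C)) := by
      have h := congrArg Matrix.transpose hCAeq
      rw [Matrix.transpose_mul, Matrix.transpose_mul] at h
      rw [← Matrix.mul_assoc, h, Matrix.mul_assoc]
    have e : deriv x t ⬝ᵥ Q *ᵥ x t + x t ⬝ᵥ Q *ᵥ deriv x t
        = (C *ᵥ x t) ⬝ᵥ (P * D) *ᵥ (C *ᵥ x t) + (C *ᵥ x t) ⬝ᵥ (Dᵀ * P) *ᵥ (C *ᵥ x t)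
          + ((C *ᵥ x t) ⬝ᵥ (P * (C * B)) *ᵥ (f t) + (f t) ⬝ᵥ ((C * B)ᵀ * P) *ᵥ (C *ᵥ x t)) := by
      simp only [hx', hQdef, add_dotProduct, dotProduct_add, Matrix.mulVec_add,
        Matrix.add_mulVec, swap2, Matrix.mulVec_mulVec, Matrix.transpose_mul,
        Matrix.transpose_transpose, Matrix.mul_assoc, hCAeq, hT]
      ring
    have hVt : V t = (C *ᵥ x t) ⬝ᵥ P *ᵥ (C *ᵥ x t) := hQdot _ _
    have hg := hfG t ht
    calc deriv x t ⬝ᵥ Q *ᵥ x t + x t ⬝ᵥ Q *ᵥ deriv x t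
        = _ := e
      _ ≤ α * (f t ⬝ᵥ G *ᵥ f t) - α * ((C *ᵥ x t) ⬝ᵥ P *ᵥ (C *ᵥ x t)) := key _ _
      _ ≤ α * (1 - V t) := by nlinarith
  -- the Lyapunov-type function W
  set W : ℝ → ℝ := fun t => (V t - 1) * Real.exp (α * t) with hWdef
  have hWd : ∀ t, HasDerivAt W
      ((deriv x t ⬝ᵥ Q *ᵥ x t + x t ⬝ᵥ Q *ᵥ deriv x t) * Real.exp (α * t)
        + (V t - 1) * (Real.exp (α * t) * α)) t := by
    intro t
    have he : HasDerivAt (fun s : ℝ => Real.exp (α * s)) (Real.exp (α * t) * α) t := by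
      simpa using (((hasDerivAt_id t).const_mul α).exp)
    exact ((hV t).sub_const 1).mul he
  have hWanti : AntitoneOn W (Set.Ici (0 : ℝ)) := by
    apply antitoneOn_of_deriv_nonpos (convex_Ici 0)
    · exact (Continuous.continuousOn (by
        exact continuous_iff_continuousAt.mpr fun t => (hWd t).continuousAt))
    · intro t _
      exact (hWd t).differentiableAt.differentiableWithinAt
    · intro t ht
      rw [interior_Ici] at ht
      rw [(hWd t).deriv]
      have h1 := hVle t (le_of_lt ht)
      have h2 := Real.exp_pos (α * t)
      nlinarith
  have hWbound : ∀ t₀ t : ℝ, 0 ≤ t₀ → t₀ ≤ t → W t ≤ W t₀ :=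
    fun t₀ t h0 h01 => hWanti (Set.mem_Ici.mpr h0) (Set.mem_Ici.mpr (h0.trans h01)) h01
  constructor
  · -- limsup part
    have hbound : ∀ t : ℝ, 0 ≤ t → V t ≤ 1 + (V 0 - 1) * Real.exp (-(α * t)) := by
      intro t ht
      have h := hWbound 0 t le_rfl ht
      rw [hWdef] at h
      simp only [mul_zero, Real.exp_zero, mul_one] at h
      have h2 := Real.exp_pos (α * t)
      have h3 : Real.exp (-(α * t)) = (Real.exp (α * t))⁻¹ := Real.exp_neg _
      rw [h3]
      have := mul_le_mul_of_nonneg_right h (le_of_lt (inv_pos.mpr h2))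
      rw [mul_assoc, mul_inv_cancel₀ (ne_of_gt h2), mul_one] at this
      linarith
    have htend : Tendsto (fun t : ℝ => 1 + (V 0 - 1) * Real.exp (-(α * t))) atTop (nhds 1) := by
      have h1 : Tendsto (fun t : ℝ => α * t) atTop atTop :=
        Tendsto.const_mul_atTop hα tendsto_id
      have h2 : Tendsto (fun t : ℝ => Real.exp (-(α * t))) atTop (nhds 0) :=
        Real.tendsto_exp_neg_atTop_nhds_zero.comp h1
      have h3 := h2.const_mul (V 0 - 1)
      have h4 := (tendsto_const_nhds (x := (1:ℝ)) (f := atTop)).add h3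
      simpa using h4
    calc limsup V atTop ≤ limsup (fun t : ℝ => 1 + (V 0 - 1) * Real.exp (-(α * t))) atTop := by
          apply limsup_le_limsup
          · filter_upwards [eventually_ge_atTop (0 : ℝ)] with t ht using hbound t ht
          · exact isCoboundedUnder_le_of_le atTop fun t => hVnn t
          · exact htend.isBoundedUnder_le
      _ = 1 := htend.limsup_eq
  · -- invariance part
    intro t₀ t h0 h01 hle
    have h := hWbound t₀ t h0 h01
    rw [hWdef] at h
    simp only at h
    have h2 := Real.exp_pos (α * t)
    have h3 := Real.exp_pos (α * t₀)
    have h4 : (V t₀ - 1) * Real.exp (α * t₀) ≤ 0 :=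
      mul_nonpos_of_nonpos_of_nonneg (by linarith) (le_of_lt h3)
    nlinarith
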